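/- Let g be a complex semisimple Lie algebra with symplectic (KKS) structure ω on each adjoint orbit, given at x by ω_x(-[z,x], -[y,x]) = (x,[y,z]). For a regular adjoint orbit O, the intersection Hess(O) = O ∩ (e_1 + b_-) is an isotropic submanifold: for v in Hess(O) and tangent vectors τ_i = -[z_i, v] with z_i in n_-, one has ω_v(τ_1, τ_2) = (v, [z_2, z_1]) = 0. -/

import Mathlib

section

variable {g : Type*} [LieRing g] [LieAlgebra ℂ g] [Module.Finite ℂ g]
  [LieAlgebra.IsKilling ℂ g] [LieAlgebra.IsSemisimple ℂ g]

/-- The exponential of `ad z` (finite sum, `ad z` nilpotent). -/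
noncomputable def expAd (z : g) : Module.End ℂ g :=
  ∑ k ∈ Finset.range (Module.finrank ℂ g + 1),
    ((k.factorial : ℂ)⁻¹ • (LieAlgebra.ad ℂ g z : Module.End ℂ g) ^ k)

/-- One step of the adjoint action by an elementary automorphism of `G`. -/
noncomputable def AdjRel (x y : g) : Prop :=
  ∃ z : g, IsNilpotent (LieAlgebra.ad ℂ g z : Module.End ℂ g) ∧ y = expAd z x

/-- `O` is an orbit of the adjoint group `G`. -/
noncomputable def IsAdjointOrbit (O : Set g) : Prop :=
  ∃ x : g, O = {y : g | Relation.EqvGen AdjRel x y}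

/-- `O` is a regular adjoint orbit. -/
noncomputable def IsRegularAdjointOrbit (O : Set g) : Prop :=
  IsAdjointOrbit O ∧ ∀ x ∈ O,
    Module.finrank ℂ (LinearMap.ker (LieAlgebra.ad ℂ g x : Module.End ℂ g))
      = LieAlgebra.rank ℂ g

set_option linter.unusedSectionVars false in
/-- Killing-orthogonality of eigenvectors of `ad w` with non-opposite eigenvalues. -/
lemma killing_ortho_of_eigen (w x y : g) (lam mu : ℂ)
    (hx : ⁅w, x⁆ = lam • x) (hy : ⁅w, y⁆ = mu • y) (h : lam + mu ≠ 0) :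
    killingForm ℂ g x y = 0 := by
  have h1 : killingForm ℂ g ⁅w, x⁆ y = - killingForm ℂ g x ⁅w, y⁆ :=
    LieModule.traceForm_apply_lie_apply' ℂ g g w x y
  rw [hx, hy] at h1
  simp only [map_smul, LinearMap.smul_apply, smul_eq_mul] at h1
  have : (lam + mu) * killingForm ℂ g x y = 0 := by linear_combination h1
  rcases mul_eq_zero.mp this with h' | h'
  · exact absurd h' h
  · exact h'

/-- With the KKS symplectic form `ω_x(-[z,x], -[y,x]) = (x,[y,z])` on adjoint
orbits, `Hess(O) = O ∩ (e₁ + b_-)` is isotropic: for `v ∈ Hess(O)` and tangent vectors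
`τ_i = -[z_i, v]` with `z_i ∈ n_-`, one has `ω_v(τ₁, τ₂) = (v, [z₂, z₁]) = 0`. -/
theorem hessenberg_isotropic_in_regular_orbit
    (H : LieSubalgebra ℂ g) (hH : H.IsCartanSubalgebra)
    (w e f : g)
    (hwe : ⁅w, e⁆ = (2 : ℂ) • e) (hwf : ⁅w, f⁆ = -(2 : ℂ) • f) (hef : ⁅e, f⁆ = w)
    (hwH : w ∈ H)
    (hH0 : H.toSubmodule = (LieAlgebra.ad ℂ g w : Module.End ℂ g).eigenspace 0)
    (Nneg : Submodule ℂ g)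
    (hN : Nneg = ⨆ k : ℕ,
      (LieAlgebra.ad ℂ g w : Module.End ℂ g).eigenspace (-(2 * ((k : ℂ) + 1))))
    (e1 : g) (c : ℂ) (hc : c ≠ 0) (he1 : e1 = c • e)
    (hnorm : killingForm ℂ g e1 f = 1)
    (Hess : Set g) (hHess : Hess = {v : g | ∃ m ∈ H.toSubmodule ⊔ Nneg, v = e1 + m})
    (O : Set g) (hO : IsRegularAdjointOrbit O)
    (v : g) (hv : v ∈ O ∩ Hess)
    (z₁ z₂ : g) (hz₁ : z₁ ∈ Nneg) (hz₂ : z₂ ∈ Nneg) :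
    killingForm ℂ g v ⁅z₂, z₁⁆ = 0 := by
  classical
  -- Set `A := ad w`
  obtain ⟨_, hvH⟩ := hv
  rw [hHess] at hvH
  obtain ⟨m, hm, hveq⟩ := hvH
  -- Main step: `κ v u = 0` for any eigenvector `u` of `ad w` with eigenvalue `-(2*(n+2))`.
  have key : ∀ (n : ℕ) (u : g), ⁅w, u⁆ = (-(2 * ((n : ℂ) + 2))) • u →
      killingForm ℂ g v u = 0 := by
    intro n u hu
    have hcast : ∀ a : ℂ, (∃ N : ℕ, a = (N : ℂ) + 1) → -(2 * ((n : ℂ) + 2)) + -a * 2 ≠ 0 := by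
      rintro a ⟨N, rfl⟩ h
      have : ((n + N + 3 : ℕ) : ℂ) = 0 := by push_cast; linear_combination -h / 2
      exact Nat.cast_ne_zero.mpr (by omega) this
    -- pairing with `e1` vanishes (eigenvalue `2`)
    have he1u : killingForm ℂ g e1 u = 0 := by
      refine killing_ortho_of_eigen w e1 u 2 (-(2 * ((n : ℂ) + 2))) ?_ hu ?_
      · rw [he1, lie_smul, hwe, smul_smul, smul_smul, mul_comm]
      · intro h
        have : ((n + 1 : ℕ) : ℂ) = 0 := by push_cast; linear_combination -h / 2
        exact Nat.cast_ne_zero.mpr (by omega) this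
    -- pairing with `m ∈ H ⊔ Nneg` vanishes
    have hmu : killingForm ℂ g m u = 0 := by
      obtain ⟨a, ha, b, hb, rfl⟩ := Submodule.mem_sup.mp hm
      have hau : killingForm ℂ g a u = 0 := by
        rw [hH0] at ha
        have ha' : ⁅w, a⁆ = (0 : ℂ) • a := by
          have := Module.End.mem_eigenspace_iff.mp ha
          rwa [LieAlgebra.ad_apply] at this
        refine killing_ortho_of_eigen w a u 0 (-(2 * ((n : ℂ) + 2))) ha' hu ?_
        intro h
        have : ((n + 2 : ℕ) : ℂ) = 0 := by push_cast; linear_combination -h / 2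
        exact Nat.cast_ne_zero.mpr (by omega) this
      have hbu : killingForm ℂ g b u = 0 := by
        rw [hN] at hb
        refine Submodule.iSup_induction (motive := fun b => killingForm ℂ g b u = 0) _ hb
          (fun j x hx => ?_) (by simp) ?_
        · have hx' : ⁅w, x⁆ = (-(2 * ((j : ℂ) + 1))) • x := by
            have := Module.End.mem_eigenspace_iff.mp hx
            rwa [LieAlgebra.ad_apply] at this
          refine killing_ortho_of_eigen w x u (-(2 * ((j : ℂ) + 1))) (-(2 * ((n : ℂ) + 2)))
            hx' hu ?_
          intro h
          have : ((j + n + 3 : ℕ) : ℂ) = 0 := by push_cast; linear_combination -h / 2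
          exact Nat.cast_ne_zero.mpr (by omega) this
        · intro x y hx hy
          rw [map_add, LinearMap.add_apply, hx, hy, add_zero]
      rw [map_add, LinearMap.add_apply, hau, hbu, add_zero]
    rw [hveq, map_add, LinearMap.add_apply, he1u, hmu, add_zero]
  -- Reduce to eigenvectors via the `iSup` description of `Nneg`, in each variable.
  rw [hN] at hz₁ hz₂
  refine Submodule.iSup_induction (motive := fun x => killingForm ℂ g v ⁅x, z₁⁆ = 0) _ hz₂
    (fun l x hx => ?_) (by simp) ?_
  · refine Submodule.iSup_induction (motive := fun y => killingForm ℂ g v ⁅x, y⁆ = 0) _ hz₁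
      (fun k y hy => ?_) (by simp) ?_
    · have hx' : ⁅w, x⁆ = (-(2 * ((l : ℂ) + 1))) • x := by
        have := Module.End.mem_eigenspace_iff.mp hx
        rwa [LieAlgebra.ad_apply] at this
      have hy' : ⁅w, y⁆ = (-(2 * ((k : ℂ) + 1))) • y := by
        have := Module.End.mem_eigenspace_iff.mp hy
        rwa [LieAlgebra.ad_apply] at this
      refine key (k + l) ⁅x, y⁆ ?_
      rw [leibniz_lie, hx', hy', lie_smul, smul_lie]
      rw [← add_smul]
      congr 1
      push_cast
      ring
    · intro a b ha hb
      rw [lie_add, map_add, ha, hb, add_zero]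
  · intro a b ha hb
    rw [add_lie, map_add, ha, hb, add_zero]


end
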